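/- Gowers–Cauchy–Schwarz for multilinear averages: Let X₁,…,X_s be finite nonempty sets, f : X₁×⋯×X_s → ℂ, and for each i ∈ [s] let g_i : X₁×⋯×X_s → ℂ be 1-bounded with g_i(x₁,…,x_s) independent of the i-th coordinate x_i. Then |𝔼_{x₁∈X₁,…,x_s∈X_s} f(x₁,…,x_s) ∏_{i=1}^s g_i(x₁,…,x_s)|^{2^s} ≤ 𝔼_{x_i^0, x_i^1 ∈ X_i for i=1,…,s} ∏_{ω∈{0,1}^s} C^{|ω|} f(x₁^{ω₁},…,x_s^{ω_s}), where C denotes complex conjugation and |ω| = ω₁+⋯+ω_s. -/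

import Mathlib

open scoped BigOperators

/-- `C^n z`: apply complex conjugation `n` times. -/
noncomputable def conjPow (n : ℕ) (z : ℂ) : ℂ := if Even n then z else (starRingEnd ℂ) z

namespace GCS

open Finset Function

lemma conjPow_mul (n : ℕ) (z w : ℂ) : conjPow n (z * w) = conjPow n z * conjPow n w := by
  unfold conjPow; split <;> simp

lemma conjPow_succ (n : ℕ) (z : ℂ) :
    conjPow (n + 1) z = (starRingEnd ℂ) (conjPow n z) := by
  unfold conjPow
  rcases Nat.even_or_odd n with h | h
  · simp [h, Nat.even_add_one, Nat.not_even_iff_odd.2 (Even.add_one h)]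
  · simp [Nat.not_even_iff_odd.2 h, Nat.even_add_one.2 (Nat.not_even_iff_odd.2 h)]

lemma norm_conjPow (n : ℕ) (z : ℂ) : ‖conjPow n z‖ = ‖z‖ := by
  unfold conjPow; split <;> simp

variable {s : ℕ} {X : Fin s → Type} [∀ i, Fintype (X i)]

/-- The mixing function. -/
def mix (ω : Fin s → Bool) (x0 x1 : ∀ i, X i) : ∀ i, X i :=
  fun i => if ω i then x1 i else x0 i

/-- Weight of a cube vertex. -/
def wt (ω : Fin s → Bool) : ℕ := ∑ i, if ω i then 1 else 0

/-- Cube vertices supported on the first `k` coordinates. -/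
def Fk (s k : ℕ) : Finset (Fin s → Bool) :=
  univ.filter fun ω => ∀ i : Fin s, k ≤ (i : ℕ) → ω i = false

lemma mem_Fk {k : ℕ} {ω : Fin s → Bool} :
    ω ∈ Fk s k ↔ ∀ i : Fin s, k ≤ (i : ℕ) → ω i = false := by
  simp [Fk]

/-- Fiber-counting identity. -/
lemma sum_update (κ : Fin s) (φ : (∀ i, X i) → ℂ) :
    ∑ x : ∀ i, X i, ∑ y : X κ, φ (Function.update x κ y)
      = (Fintype.card (X κ) : ℂ) * ∑ x : ∀ i, X i, φ x := by
  classical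
  let e : ((∀ i, X i) × X κ) ≃ ((∀ i, X i) × X κ) :=
    { toFun := fun p => (Function.update p.1 κ p.2, p.1 κ)
      invFun := fun p => (Function.update p.1 κ p.2, p.1 κ)
      left_inv := fun p => by simp
      right_inv := fun p => by simp }
  have h1 : ∑ p : (∀ i, X i) × X κ, φ (Function.update p.1 κ p.2)
      = ∑ p : (∀ i, X i) × X κ, φ p.1 := by
    rw [← Equiv.sum_comp e (fun p => φ p.1)]
    rfl
  calc ∑ x : ∀ i, X i, ∑ y : X κ, φ (Function.update x κ y)
      = ∑ p : (∀ i, X i) × X κ, φ (Function.update p.1 κ p.2) := by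
        rw [Fintype.sum_prod_type]
    _ = ∑ p : (∀ i, X i) × X κ, φ p.1 := h1
    _ = (Fintype.card (X κ) : ℂ) * ∑ x : ∀ i, X i, φ x := by
        rw [Fintype.sum_prod_type]
        simp only [Finset.sum_const, Finset.card_univ, nsmul_eq_mul]
        rw [← Finset.mul_sum]

lemma Fk_zero : Fk s 0 = {fun _ => false} := by
  ext ω
  simp only [mem_Fk, Finset.mem_singleton]
  constructor
  · intro h; funext i; exact h i (Nat.zero_le _)
  · intro h i _; rw [h]

lemma wt_false : wt (fun _ : Fin s => false) = 0 := by simp [wt]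

lemma Fk_succ {k : ℕ} (hk : k < s) :
    Fk s (k + 1) = Fk s k ∪ (Fk s k).image (fun ω => Function.update ω ⟨k, hk⟩ true) := by
  classical
  ext ω
  simp only [Finset.mem_union, Finset.mem_image, mem_Fk]
  constructor
  · intro h
    by_cases hω : ω ⟨k, hk⟩ = true
    · right
      refine ⟨Function.update ω ⟨k, hk⟩ false, ?_, ?_⟩
      · intro i hi
        by_cases hik : i = ⟨k, hk⟩
        · rw [hik, Function.update_self]
        · rw [Function.update_of_ne hik]
          refine h i ?_
          rcases Nat.lt_or_ge (i : ℕ) (k+1) with h' | h'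
          · exfalso; exact hik (Fin.ext (Nat.le_antisymm (Nat.lt_succ_iff.1 h') hi))
          · exact h'
      · funext j
        by_cases hjk : j = ⟨k, hk⟩
        · subst hjk; simp [hω]
        · simp [Function.update_of_ne hjk]
    · left
      intro i hi
      by_cases hik : i = ⟨k, hk⟩
      · subst hik; exact Bool.eq_false_iff.2 (fun hc => hω hc)
      · refine h i ?_
        rcases Nat.lt_or_ge (i : ℕ) (k+1) with h' | h'
        · exfalso; exact hik (Fin.ext (Nat.le_antisymm (Nat.lt_succ_iff.1 h') hi))
        · exact h'
  · intro h
    rcases h with h | ⟨ω', hω', rfl⟩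
    · intro i hi; exact h i (Nat.le_of_succ_le hi)
    · intro i hi
      have hik : i ≠ ⟨k, hk⟩ := by
        intro hc; rw [hc] at hi; simp at hi
      rw [Function.update_of_ne hik]
      exact hω' i (by omega)

lemma update_true_inj {k : ℕ} (hk : k < s) {a b : Fin s → Bool}
    (ha : a ∈ Fk s k) (hb : b ∈ Fk s k)
    (hab : Function.update a ⟨k, hk⟩ true = Function.update b ⟨k, hk⟩ true) : a = b := by
  have hak : a ⟨k, hk⟩ = false := (mem_Fk.1 ha) _ le_rfl
  have hbk : b ⟨k, hk⟩ = false := (mem_Fk.1 hb) _ le_rfl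
  funext j
  by_cases hjk : j = ⟨k, hk⟩
  · rw [hjk, hak, hbk]
  · have := congrFun hab j
    simpa [Function.update_of_ne hjk] using this

lemma disjoint_Fk {k : ℕ} (hk : k < s) :
    Disjoint (Fk s k) ((Fk s k).image (fun ω => Function.update ω ⟨k, hk⟩ true)) := by
  rw [Finset.disjoint_right]
  rintro ω hω hω'
  rcases Finset.mem_image.1 hω with ⟨a, _, rfl⟩
  have := (mem_Fk.1 hω') ⟨k, hk⟩ le_rfl
  simp at this

lemma prod_Fk_succ {k : ℕ} (hk : k < s) (a : (Fin s → Bool) → ℂ) :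
    ∏ ω ∈ Fk s (k + 1), a ω
      = (∏ ω ∈ Fk s k, a ω) * ∏ ω ∈ Fk s k, a (Function.update ω ⟨k, hk⟩ true) := by
  classical
  rw [Fk_succ hk, Finset.prod_union (disjoint_Fk hk),
    Finset.prod_image (fun x hx y hy h => update_true_inj hk hx hy h)]

lemma wt_update_true {k : ℕ} (hk : k < s) {ω : Fin s → Bool} (hω : ω ⟨k, hk⟩ = false) :
    wt (Function.update ω ⟨k, hk⟩ true) = wt ω + 1 := by
  classical
  unfold wt
  have h1 : ∀ i ∈ Finset.univ.erase (⟨k, hk⟩ : Fin s),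
      (if Function.update ω ⟨k, hk⟩ true i then 1 else 0) = (if ω i then (1:ℕ) else 0) :=
    fun i hi => by rw [Function.update_of_ne (Finset.ne_of_mem_erase hi)]
  rw [← Finset.sum_erase_add _ _ (Finset.mem_univ (⟨k, hk⟩ : Fin s)),
      ← Finset.sum_erase_add _ (fun i => if ω i then (1:ℕ) else 0)
        (Finset.mem_univ (⟨k, hk⟩ : Fin s)),
      Finset.sum_congr rfl h1]
  simp [hω]

variable (f : (∀ i, X i) → ℂ) (g : Fin s → (∀ i, X i) → ℂ)

/-- `f` multiplied by the `g i` for `i ≥ k`. -/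
def hfun (k : ℕ) : (∀ i, X i) → ℂ :=
  fun x => f x * ∏ i ∈ univ.filter (fun i : Fin s => k ≤ (i : ℕ)), g i x

/-- Product of `conjPow`-twisted values of `hfun f g m` over cube vertices in `Fk s k`. -/
noncomputable def PP (k m : ℕ) (x0 x1 : ∀ i, X i) : ℂ :=
  ∏ ω ∈ Fk s k, conjPow (wt ω) (hfun f g m (mix ω x0 x1))

lemma hfun_split {k : ℕ} (hk : k < s) (x : ∀ i, X i) :
    hfun f g k x = hfun f g (k + 1) x * g ⟨k, hk⟩ x := by
  have hins : (univ.filter (fun i : Fin s => k ≤ (i : ℕ)))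
      = insert (⟨k, hk⟩ : Fin s) (univ.filter (fun i : Fin s => k + 1 ≤ (i : ℕ))) := by
    ext i
    simp only [Finset.mem_filter, Finset.mem_univ, true_and, Finset.mem_insert]
    constructor
    · intro hi
      rcases Nat.eq_or_lt_of_le hi with h | h
      · left; exact Fin.ext h.symm
      · right; exact h
    · rintro (rfl | h)
      · exact le_rfl
      · omega
  have hnot : (⟨k, hk⟩ : Fin s) ∉ univ.filter (fun i : Fin s => k + 1 ≤ (i : ℕ)) := by
    simp
  unfold hfun
  rw [hins, Finset.prod_insert hnot]
  ring

lemma mix_update_right {k : ℕ} (hk : k < s) {ω : Fin s → Bool} (hω : ω ⟨k, hk⟩ = false)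
    (x0 x1 : ∀ i, X i) (y' : X ⟨k, hk⟩) :
    mix ω x0 (Function.update x1 ⟨k, hk⟩ y') = mix ω x0 x1 := by
  funext j
  unfold mix
  by_cases hjk : j = ⟨k, hk⟩
  · subst hjk; rw [hω]; simp
  · rw [Function.update_of_ne hjk]

lemma mix_pair_true {k : ℕ} (hk : k < s) {ω : Fin s → Bool} (hω : ω ⟨k, hk⟩ = false)
    (x0 x1 : ∀ i, X i) (y y' : X ⟨k, hk⟩) :
    mix (Function.update ω ⟨k, hk⟩ true) (Function.update x0 ⟨k, hk⟩ y)
        (Function.update x1 ⟨k, hk⟩ y')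
      = mix ω (Function.update x0 ⟨k, hk⟩ y') x1 := by
  funext j
  unfold mix
  by_cases hjk : j = ⟨k, hk⟩
  · subst hjk
    rw [Function.update_self, hω, Function.update_self, Function.update_self]
    simp
  · rw [Function.update_of_ne hjk, Function.update_of_ne hjk, Function.update_of_ne hjk,
      Function.update_of_ne hjk]

/-- Pointwise pairing identity. -/
lemma PP_pair {k : ℕ} (hk : k < s) (x0 x1 : ∀ i, X i) (y y' : X ⟨k, hk⟩) :
    PP f g (k + 1) (k + 1) (Function.update x0 ⟨k, hk⟩ y) (Function.update x1 ⟨k, hk⟩ y')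
      = PP f g k (k + 1) (Function.update x0 ⟨k, hk⟩ y) x1 *
        (starRingEnd ℂ) (PP f g k (k + 1) (Function.update x0 ⟨k, hk⟩ y') x1) := by
  unfold PP
  rw [prod_Fk_succ hk]
  congr 1
  · refine Finset.prod_congr rfl fun ω hω => ?_
    rw [mix_update_right hk ((mem_Fk.1 hω) _ le_rfl)]
  · rw [map_prod]
    refine Finset.prod_congr rfl fun ω hω => ?_
    have hωk : ω ⟨k, hk⟩ = false := (mem_Fk.1 hω) _ le_rfl
    rw [wt_update_true hk hωk, conjPow_succ, mix_pair_true hk hωk]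

/-- Key identity: the double sum of `W * conj W` equals `card² ·` the next-level sum. -/
lemma identityI {k : ℕ} (hk : k < s) :
    ∑ x0 : ∀ i, X i, ∑ x1 : ∀ i, X i,
        (∑ y : X ⟨k, hk⟩, PP f g k (k + 1) (Function.update x0 ⟨k, hk⟩ y) x1) *
          (starRingEnd ℂ)
            (∑ y : X ⟨k, hk⟩, PP f g k (k + 1) (Function.update x0 ⟨k, hk⟩ y) x1)
      = (Fintype.card (X ⟨k, hk⟩) : ℂ) ^ 2 *
          ∑ x0 : ∀ i, X i, ∑ x1 : ∀ i, X i, PP f g (k + 1) (k + 1) x0 x1 := by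
  classical
  set κ : Fin s := ⟨k, hk⟩
  set c : ℂ := (Fintype.card (X κ) : ℂ)
  have hinner : ∀ x0 x1 : ∀ i, X i,
      (∑ y : X κ, PP f g k (k + 1) (Function.update x0 κ y) x1) *
        (starRingEnd ℂ) (∑ y : X κ, PP f g k (k + 1) (Function.update x0 κ y) x1)
      = ∑ y : X κ, ∑ y' : X κ,
          PP f g (k + 1) (k + 1) (Function.update x0 κ y) (Function.update x1 κ y') := by
    intro x0 x1
    rw [map_sum, Finset.sum_mul_sum]
    exact Finset.sum_congr rfl fun y _ => Finset.sum_congr rfl fun y' _ =>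
      (PP_pair f g hk x0 x1 y y').symm
  calc ∑ x0 : ∀ i, X i, ∑ x1 : ∀ i, X i,
        (∑ y : X κ, PP f g k (k + 1) (Function.update x0 κ y) x1) *
          (starRingEnd ℂ) (∑ y : X κ, PP f g k (k + 1) (Function.update x0 κ y) x1)
      = ∑ x0 : ∀ i, X i, ∑ x1 : ∀ i, X i, ∑ y : X κ, ∑ y' : X κ,
          PP f g (k + 1) (k + 1) (Function.update x0 κ y) (Function.update x1 κ y') := by
        exact Finset.sum_congr rfl fun x0 _ => Finset.sum_congr rfl fun x1 _ => hinner x0 x1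
    _ = ∑ x0 : ∀ i, X i, ∑ y : X κ, ∑ x1 : ∀ i, X i, ∑ y' : X κ,
          PP f g (k + 1) (k + 1) (Function.update x0 κ y) (Function.update x1 κ y') := by
        exact Finset.sum_congr rfl fun x0 _ => Finset.sum_comm ..

    _ = ∑ x0 : ∀ i, X i, ∑ y : X κ,
          (c * ∑ x1 : ∀ i, X i,
            PP f g (k + 1) (k + 1) (Function.update x0 κ y) x1) := by
        exact Finset.sum_congr rfl fun x0 _ => Finset.sum_congr rfl fun y _ =>
          sum_update κ (fun x1 => PP f g (k + 1) (k + 1) (Function.update x0 κ y) x1)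
    _ = c * ∑ x0 : ∀ i, X i, ∑ y : X κ,
          ∑ x1 : ∀ i, X i, PP f g (k + 1) (k + 1) (Function.update x0 κ y) x1 := by
        rw [Finset.mul_sum]
        exact Finset.sum_congr rfl fun x0 _ => by rw [Finset.mul_sum]
    _ = c * (c * ∑ x0 : ∀ i, X i,
          ∑ x1 : ∀ i, X i, PP f g (k + 1) (k + 1) x0 x1) := by
        rw [sum_update κ (fun x0 => ∑ x1 : ∀ i, X i, PP f g (k + 1) (k + 1) x0 x1)]
    _ = c ^ 2 * ∑ x0 : ∀ i, X i, ∑ x1 : ∀ i, X i, PP f g (k + 1) (k + 1) x0 x1 := by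
        ring

/-- The product of twisted `g κ` values. -/
noncomputable def Gf (κ : Fin s) (k : ℕ) (x0 x1 : ∀ i, X i) : ℂ :=
  ∏ ω ∈ Fk s k, conjPow (wt ω) (g κ (mix ω x0 x1))

lemma PP_split {k : ℕ} (hk : k < s) (x0 x1 : ∀ i, X i) :
    PP f g k k x0 x1 = PP f g k (k + 1) x0 x1 * Gf g ⟨k, hk⟩ k x0 x1 := by
  unfold PP Gf
  rw [← Finset.prod_mul_distrib]
  exact Finset.prod_congr rfl fun ω _ => by rw [hfun_split f g hk, conjPow_mul]

lemma Gf_update {k : ℕ} (hk : k < s)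
    (hgind : ∀ (i : Fin s) (x y : ∀ j, X j), (∀ j, j ≠ i → x j = y j) → g i x = g i y)
    (x0 x1 : ∀ i, X i) (y : X ⟨k, hk⟩) :
    Gf g ⟨k, hk⟩ k (Function.update x0 ⟨k, hk⟩ y) x1 = Gf g ⟨k, hk⟩ k x0 x1 := by
  unfold Gf
  refine Finset.prod_congr rfl fun ω _ => ?_
  congr 1
  refine hgind ⟨k, hk⟩ _ _ fun j hj => ?_
  unfold mix
  rw [Function.update_of_ne hj]

lemma Gf_norm (hg1 : ∀ i x, ‖g i x‖ ≤ 1) (κ : Fin s) (k : ℕ) (x0 x1 : ∀ i, X i) :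
    ‖Gf g κ k x0 x1‖ ≤ 1 := by
  unfold Gf
  rw [norm_prod]
  exact Finset.prod_le_one (fun ω _ => norm_nonneg _)
    (fun ω _ => by rw [norm_conjPow]; exact hg1 _ _)

lemma Gstep {k : ℕ} (hk : k < s)
    (hgind : ∀ (i : Fin s) (x y : ∀ j, X j), (∀ j, j ≠ i → x j = y j) → g i x = g i y) :
    (Fintype.card (X ⟨k, hk⟩) : ℂ) * ∑ x0 : ∀ i, X i, ∑ x1 : ∀ i, X i, PP f g k k x0 x1
      = ∑ x0 : ∀ i, X i, ∑ x1 : ∀ i, X i,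
          (∑ y : X ⟨k, hk⟩, PP f g k (k + 1) (Function.update x0 ⟨k, hk⟩ y) x1) *
            Gf g ⟨k, hk⟩ k x0 x1 := by
  classical
  set κ : Fin s := ⟨k, hk⟩
  rw [← sum_update κ (fun x0 => ∑ x1 : ∀ i, X i, PP f g k k x0 x1)]
  refine Finset.sum_congr rfl fun x0 _ => ?_
  calc ∑ y : X κ, ∑ x1 : ∀ i, X i, PP f g k k (Function.update x0 κ y) x1
      = ∑ y : X κ, ∑ x1 : ∀ i, X i,
          PP f g k (k + 1) (Function.update x0 κ y) x1 * Gf g κ k x0 x1 := by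
        refine Finset.sum_congr rfl fun y _ => Finset.sum_congr rfl fun x1 _ => ?_
        rw [PP_split f g hk, Gf_update g hk hgind]
    _ = ∑ x1 : ∀ i, X i, ∑ y : X κ,
          PP f g k (k + 1) (Function.update x0 κ y) x1 * Gf g κ k x0 x1 :=
        Finset.sum_comm ..
    _ = ∑ x1 : ∀ i, X i,
          (∑ y : X κ, PP f g k (k + 1) (Function.update x0 κ y) x1) * Gf g κ k x0 x1 := by
        exact Finset.sum_congr rfl fun x1 _ => by rw [Finset.sum_mul]

variable [∀ i, Nonempty (X i)]

lemma mul_conj_eq (z : ℂ) : z * (starRingEnd ℂ) z = (‖z‖ : ℂ) ^ 2 := by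
  rw [Complex.mul_conj, Complex.normSq_eq_norm_sq]
  push_cast
  ring

lemma sum_normsq_eq {k : ℕ} (hk : k < s) :
    ((∑ x0 : ∀ i, X i, ∑ x1 : ∀ i, X i,
        ‖∑ y : X ⟨k, hk⟩, PP f g k (k + 1) (Function.update x0 ⟨k, hk⟩ y) x1‖ ^ 2 : ℝ) : ℂ)
      = (Fintype.card (X ⟨k, hk⟩) : ℂ) ^ 2 *
          ∑ x0 : ∀ i, X i, ∑ x1 : ∀ i, X i, PP f g (k + 1) (k + 1) x0 x1 := by
  rw [← identityI f g hk]
  push_cast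
  exact Finset.sum_congr rfl fun x0 _ => Finset.sum_congr rfl fun x1 _ =>
    (mul_conj_eq _).symm

/-- The level-`k+1` sum is a nonnegative real. -/
lemma S_real {k : ℕ} (hk : k < s) :
    ‖∑ x0 : ∀ i, X i, ∑ x1 : ∀ i, X i, PP f g (k + 1) (k + 1) x0 x1‖
      ≤ (∑ x0 : ∀ i, X i, ∑ x1 : ∀ i, X i, PP f g (k + 1) (k + 1) x0 x1).re := by
  classical
  set κ : Fin s := ⟨k, hk⟩
  set S' := ∑ x0 : ∀ i, X i, ∑ x1 : ∀ i, X i, PP f g (k + 1) (k + 1) x0 x1 with hS'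
  set r : ℝ := ∑ x0 : ∀ i, X i, ∑ x1 : ∀ i, X i,
      ‖∑ y : X κ, PP f g k (k + 1) (Function.update x0 κ y) x1‖ ^ 2 with hr
  have hrnn : 0 ≤ r :=
    Finset.sum_nonneg fun _ _ => Finset.sum_nonneg fun _ _ => sq_nonneg _
  have hc : (0 : ℝ) < (Fintype.card (X κ) : ℝ) := by
    exact_mod_cast Fintype.card_pos
  have heq : (r : ℂ) = (Fintype.card (X κ) : ℂ) ^ 2 * S' := sum_normsq_eq f g hk
  have hcC : ((Fintype.card (X κ) : ℂ)) ≠ 0 := Nat.cast_ne_zero.2 Fintype.card_ne_zero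
  have hc2 : ((Fintype.card (X κ) : ℂ)) ^ 2 ≠ 0 := pow_ne_zero 2 hcC
  have hSval : S' = ((r / (Fintype.card (X κ) : ℝ) ^ 2 : ℝ) : ℂ) := by
    have h' : S' = (r : ℂ) / (Fintype.card (X κ) : ℂ) ^ 2 := by
      rw [heq]; field_simp
    rw [h']
    push_cast
    ring
  rw [hSval, Complex.norm_real, Complex.ofReal_re, Real.norm_eq_abs,
    abs_of_nonneg (div_nonneg hrnn (by positivity))]

/-- Main Cauchy–Schwarz step. -/
lemma step {k : ℕ} (hk : k < s) (hg1 : ∀ i x, ‖g i x‖ ≤ 1)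
    (hgind : ∀ (i : Fin s) (x y : ∀ j, X j), (∀ j, j ≠ i → x j = y j) → g i x = g i y) :
    ‖∑ x0 : ∀ i, X i, ∑ x1 : ∀ i, X i, PP f g k k x0 x1‖ ^ 2
      ≤ (Fintype.card (∀ i, X i) : ℝ) ^ 2 *
          ‖∑ x0 : ∀ i, X i, ∑ x1 : ∀ i, X i, PP f g (k + 1) (k + 1) x0 x1‖ := by
  classical
  set κ : Fin s := ⟨k, hk⟩
  set c : ℝ := (Fintype.card (X κ) : ℝ) with hcdef
  have hc : (0 : ℝ) < c := by rw [hcdef]; exact_mod_cast Fintype.card_pos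
  set N : ℝ := (Fintype.card (∀ i, X i) : ℝ) with hNdef
  set W : (∀ i, X i) → (∀ i, X i) → ℂ :=
    fun x0 x1 => ∑ y : X κ, PP f g k (k + 1) (Function.update x0 κ y) x1 with hW
  set Sk := ∑ x0 : ∀ i, X i, ∑ x1 : ∀ i, X i, PP f g k k x0 x1 with hSk
  set S' := ∑ x0 : ∀ i, X i, ∑ x1 : ∀ i, X i, PP f g (k + 1) (k + 1) x0 x1 with hS'
  -- step 1
  have h1 : c * ‖Sk‖ ≤ ∑ x0 : ∀ i, X i, ∑ x1 : ∀ i, X i, ‖W x0 x1‖ := by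
    have : c * ‖Sk‖ = ‖(Fintype.card (X κ) : ℂ) * Sk‖ := by
      rw [norm_mul, Complex.norm_natCast]
    rw [this, Gstep f g hk hgind]
    calc ‖∑ x0 : ∀ i, X i, ∑ x1 : ∀ i, X i, W x0 x1 * Gf g κ k x0 x1‖
        ≤ ∑ x0 : ∀ i, X i, ‖∑ x1 : ∀ i, X i, W x0 x1 * Gf g κ k x0 x1‖ :=
          norm_sum_le _ _
      _ ≤ ∑ x0 : ∀ i, X i, ∑ x1 : ∀ i, X i, ‖W x0 x1 * Gf g κ k x0 x1‖ :=
          Finset.sum_le_sum fun x0 _ => norm_sum_le _ _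
      _ ≤ ∑ x0 : ∀ i, X i, ∑ x1 : ∀ i, X i, ‖W x0 x1‖ := by
          refine Finset.sum_le_sum fun x0 _ => Finset.sum_le_sum fun x1 _ => ?_
          rw [norm_mul]
          calc ‖W x0 x1‖ * ‖Gf g κ k x0 x1‖ ≤ ‖W x0 x1‖ * 1 :=
                mul_le_mul_of_nonneg_left (Gf_norm g hg1 κ k x0 x1) (norm_nonneg _)
            _ = ‖W x0 x1‖ := mul_one _
  -- step 2 : Cauchy-Schwarz
  have h2 : (∑ x0 : ∀ i, X i, ∑ x1 : ∀ i, X i, ‖W x0 x1‖) ^ 2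
      ≤ N ^ 2 * ∑ x0 : ∀ i, X i, ∑ x1 : ∀ i, X i, ‖W x0 x1‖ ^ 2 := by
    calc (∑ x0 : ∀ i, X i, ∑ x1 : ∀ i, X i, ‖W x0 x1‖) ^ 2
        = (∑ p : (∀ i, X i) × (∀ i, X i), ‖W p.1 p.2‖) ^ 2 := by
          rw [← Fintype.sum_prod_type']
      _ ≤ ((Finset.univ : Finset ((∀ i, X i) × (∀ i, X i))).card : ℝ) *
            ∑ p : (∀ i, X i) × (∀ i, X i), ‖W p.1 p.2‖ ^ 2 :=
          sq_sum_le_card_mul_sum_sq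
      _ = N ^ 2 * ∑ p : (∀ i, X i) × (∀ i, X i), ‖W p.1 p.2‖ ^ 2 := by
          rw [Finset.card_univ, Fintype.card_prod]
          push_cast [hNdef]
          ring
      _ = N ^ 2 * ∑ x0 : ∀ i, X i, ∑ x1 : ∀ i, X i, ‖W x0 x1‖ ^ 2 := by
          rw [← Fintype.sum_prod_type']
  -- step 3
  have h3 : ∑ x0 : ∀ i, X i, ∑ x1 : ∀ i, X i, ‖W x0 x1‖ ^ 2 ≤ c ^ 2 * ‖S'‖ := by
    have heq : ((∑ x0 : ∀ i, X i, ∑ x1 : ∀ i, X i, ‖W x0 x1‖ ^ 2 : ℝ) : ℂ)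
        = (Fintype.card (X κ) : ℂ) ^ 2 * S' := sum_normsq_eq f g hk
    have := congrArg Complex.re heq
    rw [Complex.ofReal_re] at this
    rw [this]
    have : ((Fintype.card (X κ) : ℂ) ^ 2 * S').re = c ^ 2 * S'.re := by
      have : ((Fintype.card (X κ) : ℂ)) ^ 2 = ((c ^ 2 : ℝ) : ℂ) := by
        push_cast [hcdef]; ring
      rw [this, Complex.re_ofReal_mul]
    rw [this]
    exact mul_le_mul_of_nonneg_left (Complex.re_le_norm S') (by positivity)
  -- combine
  have hcomb : c ^ 2 * ‖Sk‖ ^ 2 ≤ c ^ 2 * (N ^ 2 * ‖S'‖) := by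
    calc c ^ 2 * ‖Sk‖ ^ 2 = (c * ‖Sk‖) ^ 2 := by ring
      _ ≤ (∑ x0 : ∀ i, X i, ∑ x1 : ∀ i, X i, ‖W x0 x1‖) ^ 2 := by
          refine pow_le_pow_left₀ (by positivity) h1 2
      _ ≤ N ^ 2 * ∑ x0 : ∀ i, X i, ∑ x1 : ∀ i, X i, ‖W x0 x1‖ ^ 2 := h2
      _ ≤ N ^ 2 * (c ^ 2 * ‖S'‖) :=
          mul_le_mul_of_nonneg_left h3 (by positivity)
      _ = c ^ 2 * (N ^ 2 * ‖S'‖) := by ring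
  exact le_of_mul_le_mul_left hcomb (by positivity)

lemma base_case :
    ∑ x0 : ∀ i, X i, ∑ x1 : ∀ i, X i, PP f g 0 0 x0 x1
      = (Fintype.card (∀ i, X i) : ℂ) * ∑ x : ∀ i, X i, f x * ∏ i, g i x := by
  have hPP : ∀ x0 x1 : ∀ i, X i, PP f g 0 0 x0 x1 = f x0 * ∏ i, g i x0 := by
    intro x0 x1
    unfold PP
    rw [Fk_zero, Finset.prod_singleton, wt_false]
    have h0 : conjPow 0 (hfun f g 0 (mix (fun _ => false) x0 x1))
        = hfun f g 0 (mix (fun _ => false) x0 x1) := by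
      unfold conjPow; simp
    rw [h0]
    have hmix : mix (fun _ : Fin s => false) x0 x1 = x0 := by
      funext j; unfold mix; simp
    rw [hmix]
    unfold hfun
    congr 1
    refine Finset.prod_congr ?_ fun _ _ => rfl
    exact Finset.filter_true_of_mem fun i _ => Nat.zero_le _
  simp only [hPP, Finset.sum_const, Finset.card_univ, nsmul_eq_mul]
  rw [← Finset.mul_sum]

lemma top_case :
    ∑ x0 : ∀ i, X i, ∑ x1 : ∀ i, X i, PP f g s s x0 x1
      = ∑ x0 : ∀ i, X i, ∑ x1 : ∀ i, X i,
          ∏ ω : Fin s → Bool,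
            conjPow (∑ i, if ω i then 1 else 0)
              (f (fun i => if ω i then x1 i else x0 i)) := by
  refine Finset.sum_congr rfl fun x0 _ => Finset.sum_congr rfl fun x1 _ => ?_
  unfold PP
  have hF : Fk s s = Finset.univ := by
    ext ω
    simp only [mem_Fk, Finset.mem_univ, iff_true]
    intro i hi
    exact absurd hi (by have := i.isLt; omega)
  have hh : ∀ x : ∀ i, X i, hfun f g s x = f x := by
    intro x
    unfold hfun
    rw [Finset.filter_false_of_mem, Finset.prod_empty, mul_one]
    intro i _
    have := i.isLt; omega
  rw [hF]
  exact Finset.prod_congr rfl fun ω _ => by rw [hh]; rfl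

lemma main_ind (hg1 : ∀ i x, ‖g i x‖ ≤ 1)
    (hgind : ∀ (i : Fin s) (x y : ∀ j, X j), (∀ j, j ≠ i → x j = y j) → g i x = g i y) :
    ∀ k, k ≤ s →
      (Fintype.card (∀ i, X i) : ℝ) ^ 2 * ‖∑ x : ∀ i, X i, f x * ∏ i, g i x‖ ^ (2 ^ k)
        ≤ (Fintype.card (∀ i, X i) : ℝ) ^ (2 ^ k) *
            ‖∑ x0 : ∀ i, X i, ∑ x1 : ∀ i, X i, PP f g k k x0 x1‖ := by
  classical
  set N : ℝ := (Fintype.card (∀ i, X i) : ℝ) with hNdef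
  have hN : (0 : ℝ) < N := by rw [hNdef]; exact_mod_cast Fintype.card_pos
  set T := ∑ x : ∀ i, X i, f x * ∏ i, g i x with hT
  intro k
  induction k with
  | zero =>
    intro _
    rw [pow_zero, pow_one, pow_one, base_case f g, norm_mul, Complex.norm_natCast]
    rw [← hNdef]
    ring_nf
    exact le_refl _
  | succ k ih =>
    intro hks
    have hk : k < s := hks
    have ihk := ih (le_of_lt hk)
    have hsq : (N ^ 2 * ‖T‖ ^ 2 ^ k) ^ 2 ≤
        (N ^ 2 ^ k * ‖∑ x0 : ∀ i, X i, ∑ x1 : ∀ i, X i, PP f g k k x0 x1‖) ^ 2 :=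
      pow_le_pow_left₀ (by positivity) ihk 2
    have hstep := step f g hk hg1 hgind
    have key : N ^ 4 * ‖T‖ ^ 2 ^ (k + 1)
        ≤ N ^ 2 ^ (k + 1) * (N ^ 2 *
            ‖∑ x0 : ∀ i, X i, ∑ x1 : ∀ i, X i, PP f g (k + 1) (k + 1) x0 x1‖) := by
      have hexp : (2 : ℕ) ^ (k + 1) = 2 ^ k * 2 := pow_succ 2 k
      calc N ^ 4 * ‖T‖ ^ 2 ^ (k + 1) = (N ^ 2 * ‖T‖ ^ 2 ^ k) ^ 2 := by
            rw [hexp, pow_mul]; ring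
        _ ≤ (N ^ 2 ^ k * ‖∑ x0 : ∀ i, X i, ∑ x1 : ∀ i, X i, PP f g k k x0 x1‖) ^ 2 := hsq
        _ = N ^ 2 ^ (k + 1) * ‖∑ x0 : ∀ i, X i, ∑ x1 : ∀ i, X i, PP f g k k x0 x1‖ ^ 2 := by
            rw [hexp, pow_mul]; ring
        _ ≤ N ^ 2 ^ (k + 1) * ((Fintype.card (∀ i, X i) : ℝ) ^ 2 *
            ‖∑ x0 : ∀ i, X i, ∑ x1 : ∀ i, X i, PP f g (k + 1) (k + 1) x0 x1‖) :=
            mul_le_mul_of_nonneg_left hstep (by positivity)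
        _ = N ^ 2 ^ (k + 1) * (N ^ 2 *
            ‖∑ x0 : ∀ i, X i, ∑ x1 : ∀ i, X i, PP f g (k + 1) (k + 1) x0 x1‖) := by
            rw [← hNdef]
    have h2 : N ^ 2 * (N ^ 2 * ‖T‖ ^ 2 ^ (k + 1)) ≤ N ^ 2 * (N ^ 2 ^ (k + 1) *
        ‖∑ x0 : ∀ i, X i, ∑ x1 : ∀ i, X i, PP f g (k + 1) (k + 1) x0 x1‖) := by
      calc N ^ 2 * (N ^ 2 * ‖T‖ ^ 2 ^ (k + 1)) = N ^ 4 * ‖T‖ ^ 2 ^ (k + 1) := by ring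
        _ ≤ N ^ 2 ^ (k + 1) * (N ^ 2 *
            ‖∑ x0 : ∀ i, X i, ∑ x1 : ∀ i, X i, PP f g (k + 1) (k + 1) x0 x1‖) := key
        _ = N ^ 2 * (N ^ 2 ^ (k + 1) *
            ‖∑ x0 : ∀ i, X i, ∑ x1 : ∀ i, X i, PP f g (k + 1) (k + 1) x0 x1‖) := by ring
    exact le_of_mul_le_mul_left h2 (by positivity)

end GCS

/-- Gowers–Cauchy–Schwarz inequality for multilinear averages. -/
theorem stmt3 (s : ℕ) (hs : 1 ≤ s) (X : Fin s → Type) [∀ i, Fintype (X i)]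
    [∀ i, Nonempty (X i)] (f : (∀ i, X i) → ℂ) (g : Fin s → (∀ i, X i) → ℂ)
    (hg1 : ∀ i x, ‖g i x‖ ≤ 1)
    (hgind : ∀ (i : Fin s) (x y : ∀ j, X j), (∀ j, j ≠ i → x j = y j) → g i x = g i y) :
    ‖(∑ x : ∀ i, X i, f x * ∏ i, g i x) / (Fintype.card (∀ i, X i) : ℂ)‖ ^ (2 ^ s) ≤
      ((∑ x0 : ∀ i, X i, ∑ x1 : ∀ i, X i,
          ∏ ω : Fin s → Bool,
            conjPow (∑ i, if ω i then 1 else 0)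
              (f (fun i => if ω i then x1 i else x0 i))) /
        ((Fintype.card (∀ i, X i) : ℂ) ^ 2)).re := by
  classical
  obtain ⟨t, rfl⟩ : ∃ t, s = t + 1 := ⟨s - 1, by omega⟩
  set N : ℝ := (Fintype.card (∀ i, X i) : ℝ) with hNdef
  have hN : (0 : ℝ) < N := by rw [hNdef]; exact_mod_cast Fintype.card_pos
  set T := ∑ x : ∀ i, X i, f x * ∏ i, g i x with hT
  set S := ∑ x0 : ∀ i, X i, ∑ x1 : ∀ i, X i, GCS.PP f g (t + 1) (t + 1) x0 x1 with hS
  have hmain := GCS.main_ind f g hg1 hgind (t + 1) le_rfl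
  have hreal : ‖S‖ ≤ S.re := GCS.S_real f g (Nat.lt_succ_self t)
  have htop := GCS.top_case f g
  rw [← htop]
  have hlhs : ‖T / (Fintype.card (∀ i, X i) : ℂ)‖ ^ (2 ^ (t + 1))
      = ‖T‖ ^ (2 ^ (t + 1)) / N ^ (2 ^ (t + 1)) := by
    rw [norm_div, Complex.norm_natCast, div_pow, hNdef]
  have hrhs : ((S / ((Fintype.card (∀ i, X i) : ℂ) ^ 2)).re) = S.re / N ^ 2 := by
    have hcast : ((Fintype.card (∀ i, X i) : ℂ)) ^ 2 = ((N ^ 2 : ℝ) : ℂ) := by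
      rw [hNdef]; push_cast; ring
    rw [hcast, Complex.div_ofReal_re]
  rw [hlhs, hrhs, div_le_div_iff₀ (by positivity) (by positivity)]
  calc ‖T‖ ^ 2 ^ (t + 1) * N ^ 2 = N ^ 2 * ‖T‖ ^ 2 ^ (t + 1) := by ring
    _ ≤ N ^ 2 ^ (t + 1) * ‖S‖ := hmain
    _ ≤ N ^ 2 ^ (t + 1) * S.re := mul_le_mul_of_nonneg_left hreal (by positivity)
    _ = S.re * N ^ 2 ^ (t + 1) := by ring
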